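/- Let (Z, 𝒜) be a measurable space, μ a probability measure on Z, T : Z → ℝ a measurable function, n ≥ 1, and α ∈ ℝ with 1/(n+1) ≤ α ≤ 1. For z = (z₁, …, z_{n+1}) ∈ Z^{n+1} define λ̂(z₁, …, z_n) = sInf{λ ∈ ℝ : |{i ∈ {1, …, n} : λ < T(z_i)}| ≤ α·n + α − 1}. Then, under the product measure μ^{⊗(n+1)} on Z^{n+1}, the probability of the event {z : λ̂(z₁, …, z_n) < T(z_{n+1})} is at most α. -/

import Mathlib

open MeasureTheory Classical
open scoped ENNReal

section CRCAux
variable {Z : Type*} [MeasurableSpace Z]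

/-- Deterministic counting lemma: the number of indices whose value has
rank ≤ c (ties counted, from the top) is at most c. -/
lemma crc_rank_count {N : ℕ} (v : Fin N → ℝ) (c : ℝ) (hc : 0 ≤ c) :
    ((Finset.univ.filter (fun j : Fin N =>
      ((Finset.univ.filter (fun i : Fin N => v j ≤ v i)).card : ℝ) ≤ c)).card : ℝ) ≤ c := by
  set B := Finset.univ.filter (fun j : Fin N =>
      ((Finset.univ.filter (fun i : Fin N => v j ≤ v i)).card : ℝ) ≤ c) with hB
  rcases B.eq_empty_or_nonempty with h | h
  · simp [h, hc]
  · obtain ⟨j0, hj0, hmin⟩ := B.exists_min_image v h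
    have hsub : B ⊆ Finset.univ.filter (fun i : Fin N => v j0 ≤ v i) := by
      intro j hj
      exact Finset.mem_filter.mpr ⟨Finset.mem_univ _, hmin j hj⟩
    have h1 : (B.card : ℝ) ≤ ((Finset.univ.filter (fun i : Fin N => v j0 ≤ v i)).card : ℝ) := by
      exact_mod_cast Finset.card_le_card hsub
    exact h1.trans ((Finset.mem_filter.mp hj0).2)

/-- Characterization of the CRC threshold event as a rank event (case `α < 1`). -/
lemma crc_event_iff (T : Z → ℝ) (n : ℕ) (hn : 1 ≤ n) (α : ℝ)
    (hα1 : 1 / ((n : ℝ) + 1) ≤ α) (hα2 : α < 1) (z : Fin (n + 1) → Z) :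
    (sInf {lam : ℝ |
        ((Finset.univ.filter
          (fun i : Fin n => lam < T (z i.castSucc))).card : ℝ) ≤ α * n + α - 1}
      < T (z (Fin.last n)))
    ↔ ((Finset.univ.filter
        (fun j : Fin (n + 1) => T (z (Fin.last n)) ≤ T (z j))).card : ℝ) ≤ α * n + α := by
  have hnpos : (0:ℝ) < (n:ℝ) + 1 := by positivity
  have hk0 : (0:ℝ) ≤ α * n + α - 1 := by
    have := (div_le_iff₀ hnpos).mp hα1
    nlinarith
  have hkn : α * n + α - 1 < n := by nlinarith
  set t := T (z (Fin.last n)) with ht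
  set k := α * n + α - 1 with hk
  set S := {lam : ℝ |
      ((Finset.univ.filter (fun i : Fin n => lam < T (z i.castSucc))).card : ℝ) ≤ k} with hS
  have hne : Nonempty (Fin n) := ⟨⟨0, hn⟩⟩
  have huniv_ne : (Finset.univ : Finset (Fin n)).Nonempty := Finset.univ_nonempty
  have hsplit : ((Finset.univ.filter
      (fun j : Fin (n + 1) => t ≤ T (z j))).card : ℕ)
      = (Finset.univ.filter (fun i : Fin n => t ≤ T (z i.castSucc))).card + 1 := by
    rw [Finset.card_filter, Finset.card_filter, Fin.sum_univ_castSucc]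
    simp
    exact le_rfl
  have hSne : S.Nonempty := by
    set M := (Finset.univ.image fun i : Fin n => T (z i.castSucc)).max'
      (huniv_ne.image (fun i : Fin n => T (z i.castSucc))) with hM
    refine ⟨M, ?_⟩
    have : (Finset.univ.filter (fun i : Fin n => M < T (z i.castSucc))) = ∅ := by
      refine Finset.filter_eq_empty_iff.mpr ?_
      intro i _
      simp only [not_lt]
      rw [hM]
      exact Finset.le_max' (Finset.univ.image fun i : Fin n => T (z i.castSucc))
        (T (z i.castSucc))
        (Finset.mem_image_of_mem (fun i : Fin n => T (z i.castSucc)) (Finset.mem_univ i))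
    simp only [hS, Set.mem_setOf_eq, this, Finset.card_empty, Nat.cast_zero]
    exact hk0
  have hSbdd : BddBelow S := by
    refine ⟨((Finset.univ.image fun i : Fin n => T (z i.castSucc)).min'
      (huniv_ne.image (fun i : Fin n => T (z i.castSucc)))), ?_⟩
    intro lam hlam
    by_contra hlt
    push_neg at hlt
    have : (Finset.univ.filter (fun i : Fin n => lam < T (z i.castSucc))) = Finset.univ := by
      refine Finset.filter_eq_self.mpr ?_
      intro i _
      exact lt_of_lt_of_le hlt (Finset.min'_le _ _ (Finset.mem_image_of_mem _ (Finset.mem_univ i)))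
    have hcard : ((Finset.univ.filter (fun i : Fin n => lam < T (z i.castSucc))).card : ℝ) ≤ k :=
      hlam
    rw [this] at hcard
    simp only [Finset.card_univ, Fintype.card_fin] at hcard
    linarith
  rw [csInf_lt_iff hSbdd hSne]
  constructor
  · rintro ⟨lam, hlam, hlt⟩
    have hsub : (Finset.univ.filter (fun i : Fin n => t ≤ T (z i.castSucc)))
        ⊆ (Finset.univ.filter (fun i : Fin n => lam < T (z i.castSucc))) := by
      intro i hi
      rw [Finset.mem_filter] at hi ⊢
      exact ⟨hi.1, lt_of_lt_of_le hlt hi.2⟩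
    have h1 : ((Finset.univ.filter (fun i : Fin n => t ≤ T (z i.castSucc))).card : ℝ)
        ≤ ((Finset.univ.filter (fun i : Fin n => lam < T (z i.castSucc))).card : ℝ) := by
      exact_mod_cast Finset.card_le_card hsub
    have := h1.trans hlam
    rw [hsplit]
    push_cast
    linarith
  · intro h
    have h' : ((Finset.univ.filter (fun i : Fin n => t ≤ T (z i.castSucc))).card : ℝ) ≤ k := by
      rw [hsplit] at h
      push_cast at h
      rw [hk]
      linarith
    set F := insert (t - 1)
      ((Finset.univ.filter (fun i : Fin n => T (z i.castSucc) < t)).image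
        fun i => T (z i.castSucc)) with hF
    have hFne : F.Nonempty := Finset.insert_nonempty _ _
    refine ⟨F.max' hFne, ?_, ?_⟩
    · have hsub : (Finset.univ.filter (fun i : Fin n => F.max' hFne < T (z i.castSucc)))
          ⊆ (Finset.univ.filter (fun i : Fin n => t ≤ T (z i.castSucc))) := by
        intro i hi
        rw [Finset.mem_filter] at hi ⊢
        refine ⟨hi.1, ?_⟩
        by_contra hc
        push_neg at hc
        have : T (z i.castSucc) ∈ F := by
          rw [hF]
          exact Finset.mem_insert_of_mem (Finset.mem_image_of_mem _
            (Finset.mem_filter.mpr ⟨Finset.mem_univ _, hc⟩))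
        exact absurd (Finset.le_max' F _ this) (not_le.mpr hi.2)
      have h1 : ((Finset.univ.filter (fun i : Fin n => F.max' hFne < T (z i.castSucc))).card : ℝ)
          ≤ ((Finset.univ.filter (fun i : Fin n => t ≤ T (z i.castSucc))).card : ℝ) := by
        exact_mod_cast Finset.card_le_card hsub
      exact h1.trans h'
    · refine Finset.max'_lt_iff F hFne |>.mpr ?_
      intro y hy
      rw [hF, Finset.mem_insert] at hy
      rcases hy with rfl | hy
      · linarith
      · obtain ⟨i, hi, rfl⟩ := Finset.mem_image.mp hy
        exact (Finset.mem_filter.mp hi).2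

/-- The rank event sets. -/
def crcA (T : Z → ℝ) (n : ℕ) (c : ℝ) (j : Fin (n + 1)) :
    Set (Fin (n + 1) → Z) :=
  {z | ((Finset.univ.filter (fun i : Fin (n + 1) => T (z j) ≤ T (z i))).card : ℝ) ≤ c}

lemma crcA_measurable (T : Z → ℝ) (hT : Measurable T) (n : ℕ) (c : ℝ) (j : Fin (n + 1)) :
    MeasurableSet (crcA T n c j) := by
  have hg : Measurable (fun z : Fin (n + 1) → Z =>
      (Finset.univ.filter (fun i : Fin (n + 1) => T (z j) ≤ T (z i))).card) := by
    simp only [Finset.card_filter]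
    refine Finset.measurable_sum _ fun i _ => ?_
    refine Measurable.ite ?_ measurable_const measurable_const
    exact measurableSet_le (hT.comp (measurable_pi_apply j)) (hT.comp (measurable_pi_apply i))
  have : crcA T n c j = (fun z : Fin (n + 1) → Z =>
      (Finset.univ.filter (fun i : Fin (n + 1) => T (z j) ≤ T (z i))).card) ⁻¹'
      {m : ℕ | (m : ℝ) ≤ c} := rfl
  rw [this]
  exact hg MeasurableSet.of_discrete

/-- Exchangeability: all rank events have the same probability under i.i.d. sampling. -/
lemma crcA_measure_eq (μ : Measure Z) [IsProbabilityMeasure μ]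
    (T : Z → ℝ) (hT : Measurable T) (n : ℕ) (c : ℝ) (j : Fin (n + 1)) :
    (Measure.pi fun _ : Fin (n + 1) => μ) (crcA T n c j)
      = (Measure.pi fun _ : Fin (n + 1) => μ) (crcA T n c (Fin.last n)) := by
  set σ : Equiv.Perm (Fin (n + 1)) := Equiv.swap j (Fin.last n) with hσ
  have hmp : MeasurePreserving (fun z : Fin (n + 1) → Z => z ∘ σ)
      (Measure.pi fun _ : Fin (n + 1) => μ) (Measure.pi fun _ : Fin (n + 1) => μ) := by
    have h := measurePreserving_piCongrLeft (fun _ : Fin (n + 1) => μ) σ.symm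
    have heq : (fun z : Fin (n + 1) → Z => z ∘ σ)
        = MeasurableEquiv.piCongrLeft (fun _ : Fin (n + 1) => Z) σ.symm := by
      funext z
      funext b
      have := MeasurableEquiv.piCongrLeft_apply_apply σ.symm
        (β := fun _ : Fin (n + 1) => Z) z (σ b)
      simpa using this.symm
    rw [heq]
    exact h
  have hpre : crcA T n c j = (fun z : Fin (n + 1) → Z => z ∘ σ) ⁻¹' crcA T n c (Fin.last n) := by
    ext z
    simp only [crcA, Set.mem_preimage, Set.mem_setOf_eq, Function.comp_apply]
    have hσlast : σ (Fin.last n) = j := Equiv.swap_apply_right _ _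
    simp only [hσlast]
    have hcard : (Finset.univ.filter
        (fun i : Fin (n + 1) => T (z j) ≤ T (z (σ i)))).card
        = (Finset.univ.filter (fun i : Fin (n + 1) => T (z j) ≤ T (z i))).card := by
      rw [Finset.card_filter, Finset.card_filter]
      exact Equiv.sum_comp σ (fun i => if T (z j) ≤ T (z i) then 1 else 0)
    rw [hcard]
  rw [hpre]
  exact hmp.measure_preimage (crcA_measurable T hT n c (Fin.last n)).nullMeasurableSet

end CRCAux

open MeasureTheory Classical in
/-- Conformal risk control coverage guarantee (Proposition 1, i.i.d. form):
with `λ̂` the CRC threshold computed from the `n` i.i.d. calibration samples,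
the probability that a fresh i.i.d. sample's critical value `T(z_{n+1})`
exceeds `λ̂` is at most `α`. -/
theorem crc_coverage_iid {Z : Type*} [MeasurableSpace Z] (μ : Measure Z)
    [IsProbabilityMeasure μ] (T : Z → ℝ) (hT : Measurable T)
    (n : ℕ) (hn : 1 ≤ n) (α : ℝ)
    (hα1 : 1 / ((n : ℝ) + 1) ≤ α) (hα2 : α ≤ 1) :
    (Measure.pi fun _ : Fin (n + 1) => μ)
      {z : Fin (n + 1) → Z |
        sInf {lam : ℝ |
          ((Finset.univ.filter
            (fun i : Fin n => lam < T (z i.castSucc))).card : ℝ) ≤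
            α * n + α - 1}
          < T (z (Fin.last n))} ≤ ENNReal.ofReal α := by
  rcases eq_or_lt_of_le hα2 with rfl | hα2'
  · simp only [ENNReal.ofReal_one]
    exact prob_le_one
  have hnpos : (0:ℝ) < (n:ℝ) + 1 := by positivity
  have hα0 : 0 < α := lt_of_lt_of_le (by positivity) hα1
  set π := Measure.pi fun _ : Fin (n + 1) => μ with hπ
  set c : ℝ := α * n + α with hc
  have hc0 : 0 ≤ c := by positivity
  -- rewrite the event
  have hEvent : {z : Fin (n + 1) → Z |
      sInf {lam : ℝ |
        ((Finset.univ.filter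
          (fun i : Fin n => lam < T (z i.castSucc))).card : ℝ) ≤ α * n + α - 1}
        < T (z (Fin.last n))} = crcA T n c (Fin.last n) := by
    ext z
    exact crc_event_iff T n hn α hα1 hα2' z
  rw [hEvent]
  -- the averaged bound
  have hmeas : ∀ j, MeasurableSet (crcA T n c j) := crcA_measurable T hT n c
  have hsum : ∑ j : Fin (n + 1), π (crcA T n c j) ≤ ENNReal.ofReal c := by
    have h1 : ∀ j : Fin (n + 1), π (crcA T n c j)
        = ∫⁻ z, (crcA T n c j).indicator (1 : (Fin (n + 1) → Z) → ℝ≥0∞) z ∂π := by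
      intro j
      rw [lintegral_indicator_one (hmeas j)]
    simp_rw [h1]
    rw [← lintegral_finset_sum _ (fun j _ => (measurable_one.indicator (hmeas j)))]
    have hpt : ∀ z : Fin (n + 1) → Z,
        (∑ j : Fin (n + 1), (crcA T n c j).indicator (1 : (Fin (n + 1) → Z) → ℝ≥0∞) z)
          ≤ ENNReal.ofReal c := by
      intro z
      have hcount : (∑ j : Fin (n + 1), (crcA T n c j).indicator (1 : (Fin (n + 1) → Z) → ℝ≥0∞) z)
          = ((Finset.univ.filter (fun j : Fin (n + 1) =>
              ((Finset.univ.filter (fun i : Fin (n + 1) =>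
                T (z j) ≤ T (z i))).card : ℝ) ≤ c)).card : ℝ≥0∞) := by
        rw [Finset.card_filter]
        push_cast
        refine Finset.sum_congr rfl fun j _ => ?_
        simp only [Set.indicator_apply, Pi.one_apply]
        exact if_congr Iff.rfl rfl rfl
      rw [hcount]
      have hrk := crc_rank_count (fun j : Fin (n + 1) => T (z j)) c hc0
      calc ((Finset.univ.filter (fun j : Fin (n + 1) =>
              ((Finset.univ.filter (fun i : Fin (n + 1) =>
                T (z j) ≤ T (z i))).card : ℝ) ≤ c)).card : ℝ≥0∞)
          = ENNReal.ofReal ((Finset.univ.filter (fun j : Fin (n + 1) =>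
              ((Finset.univ.filter (fun i : Fin (n + 1) =>
                T (z j) ≤ T (z i))).card : ℝ) ≤ c)).card : ℝ) := by
            rw [ENNReal.ofReal_natCast]
        _ ≤ ENNReal.ofReal c := ENNReal.ofReal_le_ofReal hrk
    calc (∫⁻ z, ∑ j : Fin (n + 1), (crcA T n c j).indicator (1 : (Fin (n + 1) → Z) → ℝ≥0∞) z ∂π)
        ≤ ∫⁻ _, ENNReal.ofReal c ∂π := lintegral_mono hpt
      _ = ENNReal.ofReal c := by
          rw [lintegral_const, measure_univ, mul_one]
  have hconst : ∑ j : Fin (n + 1), π (crcA T n c j)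
      = ((n + 1 : ℕ) : ℝ≥0∞) * π (crcA T n c (Fin.last n)) := by
    rw [Finset.sum_congr rfl (fun j _ => crcA_measure_eq μ T hT n c j),
      Finset.sum_const, Finset.card_univ, Fintype.card_fin, nsmul_eq_mul]
  rw [hconst] at hsum
  have hofc : ENNReal.ofReal c = ((n + 1 : ℕ) : ℝ≥0∞) * ENNReal.ofReal α := by
    have h1 : c = ((n + 1 : ℕ) : ℝ) * α := by push_cast; ring
    rw [h1, ENNReal.ofReal_mul (by positivity), ENNReal.ofReal_natCast]
  rw [hofc] at hsum
  have hN0 : ((n + 1 : ℕ) : ℝ≥0∞) ≠ 0 := by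
    simp
  have hNtop : ((n + 1 : ℕ) : ℝ≥0∞) ≠ ⊤ := ENNReal.natCast_ne_top _
  exact (ENNReal.mul_le_mul_iff_right hN0 hNtop).mp hsum
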